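/- Let m ≥ 1, let E₁, …, E_m be real normed vector spaces, let Z₁, …, Z_m be random vectors defined on a common probability space (possibly dependent) with Z_i taking values in E_i, let Z̃_i ∈ E_i be deterministic, and let σ > 0 and C, c > 0. Suppose that for each i and every continuous linear form f : E_i → ℝ of operator norm at most 1 and every t > 0, P(|f(Z_i) − f(Z̃_i)| ≥ t) ≤ C·exp(−c(t/σ)²). Then there exist constants C', c' > 0 depending only on C and c (and not on m) such that the random vector (Z₁, …, Z_m), taking values in the product space E = E₁ × ⋯ × E_m equipped with the norm ‖(z₁, …, z_m)‖ = max_{1≤i≤m} ‖z_i‖, satisfies: for every continuous linear form u : E → ℝ of operator norm at most 1 and every t > 0, P(|u(Z₁,…,Z_m) − u(Z̃₁,…,Z̃_m)| ≥ t) ≤ C'·exp(−c'(t/σ)²). -/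

import Mathlib

open MeasureTheory ProbabilityTheory Real
open scoped ENNReal NNReal

/-- Linear concentration around a deterministic equivalent. -/
def LinearConcentration {E : Type*} [NormedAddCommGroup E] [NormedSpace ℝ E]
    {Ω : Type*} [MeasurableSpace Ω] (μ : Measure Ω) (Z : Ω → E) (Zt : E)
    (σ C c : ℝ) : Prop :=
  ∀ f : E →L[ℝ] ℝ, ‖f‖ ≤ 1 →
    ∀ t : ℝ, 0 < t →
      μ {ω | t ≤ |f (Z ω) - f Zt|} ≤
        ENNReal.ofReal (C * Real.exp (-c * (t / σ) ^ 2))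

section Auxiliary
open Set


lemma envelope {Ω : Type*} [MeasurableSpace Ω] (μ : Measure Ω) (X : Ω → ℝ)
    (K κ σ₀ : ℝ) (hK : 0 ≤ K) (hκ : 0 < κ) (hσ₀ : 0 < σ₀)
    (tail : ∀ s : ℝ, 0 < s → μ {ω | s ≤ |X ω|} ≤ ENNReal.ofReal (K * Real.exp (-κ * (s/σ₀)^2))) :
    ∃ g : Ω → ℝ≥0∞, Measurable g ∧ (∀ ω, ENNReal.ofReal |X ω| ≤ g ω) ∧
      ∀ r : ℝ, 0 < r → μ {ω | ENNReal.ofReal r ≤ g ω} ≤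
        ENNReal.ofReal (K * Real.exp (-(κ/4) * (r/σ₀)^2)) := by
  set S : ℚ → Set Ω := fun q => {ω | (q:ℝ) ≤ |X ω|} with hS
  set T : ℚ → Set Ω := fun q => ⋂ (q' : ℚ) (_ : q' ≤ q), toMeasurable μ (S q') with hT
  have hTmeas : ∀ q, MeasurableSet (T q) :=
    fun q => MeasurableSet.iInter fun q' => MeasurableSet.iInter fun _ =>
      measurableSet_toMeasurable μ _
  have hTmono : ∀ {q p : ℚ}, q ≤ p → T p ⊆ T q := by
    intro q p hqp ω hω
    simp only [hT, Set.mem_iInter] at hω ⊢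
    intro q' hq'
    exact hω q' (hq'.trans hqp)
  have hST : ∀ q, S q ⊆ T q := by
    intro q ω hω
    simp only [hT, Set.mem_iInter]
    intro q' hq'
    exact subset_toMeasurable μ _ (show ((q':ℚ):ℝ) ≤ |X ω| from le_trans (by exact_mod_cast hq') hω)
  have hTmeasure : ∀ q : ℚ, μ (T q) ≤ μ (S q) := by
    intro q
    calc μ (T q) ≤ μ (toMeasurable μ (S q)) := by
          apply measure_mono
          intro ω hω
          simp only [hT, Set.mem_iInter] at hω
          exact hω q le_rfl
      _ = μ (S q) := measure_toMeasurable _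
  refine ⟨fun ω => ⨆ q : ℚ, (T q).indicator (fun _ => ENNReal.ofReal (q:ℝ)) ω, ?_, ?_, ?_⟩
  · exact Measurable.iSup fun q => (measurable_const.indicator (hTmeas q))
  · intro ω
    by_contra hcon
    push_neg at hcon
    obtain ⟨q, hq0, hq1, hq2⟩ := ENNReal.lt_iff_exists_rat_btwn.mp hcon
    have hq1' : (⨆ q : ℚ, (T q).indicator (fun _ => ENNReal.ofReal (q:ℝ)) ω) < ENNReal.ofReal (q:ℝ) := hq1
    have hq2' : ENNReal.ofReal (q:ℝ) < ENNReal.ofReal |X ω| := hq2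
    have hqX : (q:ℝ) ≤ |X ω| :=
      ((ENNReal.ofReal_lt_ofReal_iff_of_nonneg (by exact_mod_cast hq0)).mp hq2').le
    have : ENNReal.ofReal (q:ℝ) ≤ ⨆ q : ℚ, (T q).indicator (fun _ => ENNReal.ofReal (q:ℝ)) ω := by
      refine le_trans ?_ (le_iSup _ q)
      rw [Set.indicator_of_mem (hST q hqX)]
    exact absurd (lt_of_le_of_lt this hq1') (lt_irrefl _)
  · intro r hr
    obtain ⟨q, hq1, hq2⟩ := exists_rat_btwn (show r/2 < r by linarith)
    have hq0 : (0:ℝ) < q := lt_trans (by linarith) hq1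
    have hsub : {ω | ENNReal.ofReal r ≤ ⨆ q : ℚ, (T q).indicator (fun _ => ENNReal.ofReal (q:ℝ)) ω} ⊆ T q := by
      intro ω hω
      simp only [Set.mem_setOf_eq] at hω
      have hlt : ENNReal.ofReal (q:ℝ) < ⨆ q : ℚ, (T q).indicator (fun _ => ENNReal.ofReal (q:ℝ)) ω :=
        lt_of_lt_of_le (ENNReal.ofReal_lt_ofReal_iff hr |>.mpr hq2) hω
      obtain ⟨q', hq'⟩ := lt_iSup_iff.mp hlt
      by_cases hmem : ω ∈ T q'
      · rw [Set.indicator_of_mem hmem] at hq'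
        have : (q:ℝ) < q' := by
          by_contra hle
          push_neg at hle
          exact absurd (ENNReal.ofReal_le_ofReal hle) (not_le.mpr hq')
        exact hTmono (by exact_mod_cast this.le) hmem
      · rw [Set.indicator_of_notMem hmem] at hq'
        exact absurd hq' (by simp)
    calc μ _ ≤ μ (T q) := measure_mono hsub
      _ ≤ μ (S q) := hTmeasure q
      _ ≤ ENNReal.ofReal (K * Real.exp (-κ * ((q:ℝ)/σ₀)^2)) := tail q hq0
      _ ≤ ENNReal.ofReal (K * Real.exp (-(κ/4) * (r/σ₀)^2)) := by
          apply ENNReal.ofReal_le_ofReal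
          apply mul_le_mul_of_nonneg_left _ hK
          apply Real.exp_le_exp.mpr
          rw [neg_mul, neg_mul, neg_le_neg_iff]
          calc (κ/4) * (r/σ₀)^2 ≤ (κ/4) * ((2*(q:ℝ))/σ₀)^2 := by
                gcongr
                linarith
            _ = κ * ((q:ℝ)/σ₀)^2 := by ring


lemma mgf_bound {Ω : Type*} [MeasurableSpace Ω] (μ : Measure Ω) [IsProbabilityMeasure μ]
    {g : Ω → ℝ} (hg : Measurable g) (hg0 : ∀ ω, 0 ≤ g ω)
    (K κ σ₀ L : ℝ) (hK : 0 ≤ K) (hκ : 0 < κ) (hσ₀ : 0 < σ₀) (hL : 0 < L)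
    (tail : ∀ r : ℝ, 0 < r → μ {ω | r ≤ g ω} ≤ ENNReal.ofReal (K * Real.exp (-κ * (r/σ₀)^2))) :
    ∫⁻ ω, ENNReal.ofReal (Real.exp (L * g ω)) ∂μ ≤
      ENNReal.ofReal ((1 + K * Real.sqrt (π/κ)) * Real.exp ((1/4 + 1/(4*κ)) * (L*σ₀)^2)) := by
  have hsplit : ∀ ω, ENNReal.ofReal (Real.exp (L * g ω)) =
      ENNReal.ofReal (Real.exp (L * g ω) - 1) + 1 := by
    intro ω
    rw [← ENNReal.ofReal_one, ← ENNReal.ofReal_add (by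
      have h1 : (0:ℝ) ≤ L * g ω := mul_nonneg hL.le (hg0 ω)
      have : (1:ℝ) ≤ Real.exp (L * g ω) := by
        rw [← Real.exp_zero]; exact Real.exp_le_exp.mpr h1
      linarith) zero_le_one]
    norm_num
  have hFTC : ∀ x : ℝ, ∫ s in (0:ℝ)..x, L * Real.exp (L * s) = Real.exp (L * x) - 1 := by
    intro x
    have hderiv : ∀ s ∈ Set.uIcc (0:ℝ) x,
        HasDerivAt (fun s => Real.exp (L * s)) (L * Real.exp (L * s)) s := by
      intro s _
      have h1 : HasDerivAt (fun s : ℝ => L * s) (L * 1) s := (hasDerivAt_id s).const_mul L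
      simpa [mul_comm] using h1.exp
    have hint : IntervalIntegrable (fun s => L * Real.exp (L * s)) volume 0 x :=
      (continuous_const.mul ((continuous_const.mul continuous_id).rexp)).intervalIntegrable 0 x
    have := intervalIntegral.integral_eq_sub_of_hasDerivAt (f := fun s => Real.exp (L * s))
      (f' := fun s => L * Real.exp (L * s)) (a := 0) (b := x) hderiv hint
    simpa using this
  -- layer cake
  have hlayer : ∫⁻ ω, ENNReal.ofReal (Real.exp (L * g ω) - 1) ∂μ =
      ∫⁻ s in Ioi (0:ℝ), μ {a | s ≤ g a} * ENNReal.ofReal (L * Real.exp (L * s)) := by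
    have := lintegral_comp_eq_lintegral_meas_le_mul μ
      (f := g) (g := fun s => L * Real.exp (L * s))
      (Filter.Eventually.of_forall hg0) hg.aemeasurable
      (fun t _ => (continuous_const.mul ((continuous_const.mul continuous_id).rexp)).intervalIntegrable 0 t)
      (Filter.Eventually.of_forall (fun t => by positivity))
    calc ∫⁻ ω, ENNReal.ofReal (Real.exp (L * g ω) - 1) ∂μ
        = ∫⁻ ω, ENNReal.ofReal (∫ s in (0:ℝ)..g ω, L * Real.exp (L * s)) ∂μ := by
          congr 1; funext ω; rw [hFTC]
      _ = _ := this
  -- bound the layer cake integral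
  set b : ℝ := κ / σ₀^2 with hb
  have hbpos : 0 < b := by positivity
  set a : ℝ := L / (2*b) with ha
  have hapos : 0 < a := by positivity
  have hGauss : Integrable (fun s : ℝ => K * L * Real.exp (b*a^2) * Real.exp (-b * (s - a)^2)) volume := by
    exact ((integrable_exp_neg_mul_sq hbpos).comp_sub_right a).const_mul _
  have hptwise : ∀ s : ℝ, K * L * Real.exp (L * s - κ * (s/σ₀)^2) =
      K * L * Real.exp (b*a^2) * Real.exp (-b * (s - a)^2) := by
    intro s
    rw [mul_assoc (K*L), ← Real.exp_add]
    congr 1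
    congr 1
    rw [ha, hb]
    field_simp
    ring
  have hbound : ∫⁻ s in Ioi (0:ℝ), μ {x | s ≤ g x} * ENNReal.ofReal (L * Real.exp (L * s)) ≤
      ENNReal.ofReal (K * L * Real.exp (b*a^2) * (Real.sqrt (π / b))) := by
    calc ∫⁻ s in Ioi (0:ℝ), μ {x | s ≤ g x} * ENNReal.ofReal (L * Real.exp (L * s))
        ≤ ∫⁻ s in Ioi (0:ℝ), ENNReal.ofReal (K * L * Real.exp (b*a^2) * Real.exp (-b * (s - a)^2)) := by
          apply setLIntegral_mono
          · exact (ENNReal.measurable_ofReal.comp (by fun_prop))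
          · intro s hs
            rw [Set.mem_Ioi] at hs
            calc μ {x | s ≤ g x} * ENNReal.ofReal (L * Real.exp (L * s))
                ≤ ENNReal.ofReal (K * Real.exp (-κ * (s/σ₀)^2)) * ENNReal.ofReal (L * Real.exp (L * s)) := by
                  exact mul_le_mul_left (tail s hs) _
              _ = ENNReal.ofReal (K * L * Real.exp (b*a^2) * Real.exp (-b * (s - a)^2)) := by
                  rw [← ENNReal.ofReal_mul (by positivity), ← hptwise s]
                  congr 1
                  have hee : Real.exp (-κ * (s/σ₀)^2) * Real.exp (L * s) =
                      Real.exp (L * s - κ * (s/σ₀)^2) := by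
                    rw [← Real.exp_add]; congr 1; ring
                  linear_combination (K * L) * hee
      _ ≤ ∫⁻ s : ℝ, ENNReal.ofReal (K * L * Real.exp (b*a^2) * Real.exp (-b * (s - a)^2)) := by
          exact setLIntegral_le_lintegral _ _
      _ = ENNReal.ofReal (∫ s : ℝ, K * L * Real.exp (b*a^2) * Real.exp (-b * (s - a)^2)) := by
          rw [← ofReal_integral_eq_lintegral_ofReal hGauss
            (Filter.Eventually.of_forall (fun s => by positivity))]
      _ = ENNReal.ofReal (K * L * Real.exp (b*a^2) * (Real.sqrt (π / b))) := by
          congr 1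
          rw [MeasureTheory.integral_const_mul]
          congr 1
          have : ∫ s : ℝ, Real.exp (-b * (s - a)^2) = ∫ s : ℝ, Real.exp (-b * s^2) :=
            integral_sub_right_eq_self (fun s => Real.exp (-b * s^2)) a
          rw [this, integral_gaussian]
  -- put it together
  calc ∫⁻ ω, ENNReal.ofReal (Real.exp (L * g ω)) ∂μ
      = ∫⁻ ω, (ENNReal.ofReal (Real.exp (L * g ω) - 1) + 1) ∂μ := by
        congr 1; funext ω; exact hsplit ω
    _ = (∫⁻ ω, ENNReal.ofReal (Real.exp (L * g ω) - 1) ∂μ) + 1 := by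
        rw [lintegral_add_right _ measurable_const, lintegral_const, one_mul, measure_univ]
    _ ≤ ENNReal.ofReal (K * L * Real.exp (b*a^2) * (Real.sqrt (π / b))) + 1 := by
        gcongr
        rw [hlayer]; exact hbound
    _ ≤ ENNReal.ofReal ((1 + K * Real.sqrt (π/κ)) * Real.exp ((1/4 + 1/(4*κ)) * (L*σ₀)^2)) := by
        rw [← ENNReal.ofReal_one, ← ENNReal.ofReal_add (by positivity) zero_le_one]
        apply ENNReal.ofReal_le_ofReal
        -- real arithmetic
        have hba : b * a^2 = (L*σ₀)^2 / (4*κ) := by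
          rw [ha, hb]
          field_simp
          ring
        have hsq : Real.sqrt (π / b) = σ₀ * Real.sqrt (π / κ) := by
          rw [hb]
          rw [show π / (κ / σ₀^2) = σ₀^2 * (π / κ) by field_simp]
          rw [Real.sqrt_mul (by positivity), Real.sqrt_sq hσ₀.le]
        have hxe : L * σ₀ ≤ Real.exp ((L*σ₀)^2/4) := by
          have h1 : L * σ₀ ≤ 1 + (L*σ₀)^2/4 := by nlinarith [sq_nonneg (L*σ₀ - 2)]
          have h2 : (1:ℝ) + (L*σ₀)^2/4 ≤ Real.exp ((L*σ₀)^2/4) := by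
            have := Real.add_one_le_exp ((L*σ₀)^2/4)
            linarith
          linarith
        rw [hba, hsq]
        have h3 : (L*σ₀) * Real.exp ((L*σ₀)^2 / (4*κ)) ≤ Real.exp ((1/4 + 1/(4*κ)) * (L*σ₀)^2) := by
          calc (L*σ₀) * Real.exp ((L*σ₀)^2 / (4*κ))
              ≤ Real.exp ((L*σ₀)^2/4) * Real.exp ((L*σ₀)^2 / (4*κ)) := by
                exact mul_le_mul_of_nonneg_right hxe (Real.exp_pos _).le
            _ = Real.exp ((1/4 + 1/(4*κ)) * (L*σ₀)^2) := by
                rw [← Real.exp_add]; congr 1; ring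
        have h4 : (1:ℝ) ≤ Real.exp ((1/4 + 1/(4*κ)) * (L*σ₀)^2) := by
          rw [← Real.exp_zero]
          apply Real.exp_le_exp.mpr
          positivity
        have hKs : 0 ≤ K * Real.sqrt (π/κ) := by positivity
        calc K * L * Real.exp ((L*σ₀)^2 / (4*κ)) * (σ₀ * Real.sqrt (π/κ)) + 1
            = K * Real.sqrt (π/κ) * ((L*σ₀) * Real.exp ((L*σ₀)^2 / (4*κ))) + 1 := by ring
          _ ≤ K * Real.sqrt (π/κ) * Real.exp ((1/4 + 1/(4*κ)) * (L*σ₀)^2)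
                + Real.exp ((1/4 + 1/(4*κ)) * (L*σ₀)^2) := by gcongr
          _ = (1 + K * Real.sqrt (π/κ)) * Real.exp ((1/4 + 1/(4*κ)) * (L*σ₀)^2) := by ring


section NormLemmas
variable {m : ℕ} {E : Fin m → Type} [∀ i, NormedAddCommGroup (E i)] [∀ i, NormedSpace ℝ (E i)]

/-- The continuous linear inclusion of a factor into a finite product. -/
noncomputable def sgl (E : Fin m → Type) [∀ i, NormedAddCommGroup (E i)] [∀ i, NormedSpace ℝ (E i)]
    (i : Fin m) : E i →L[ℝ] (∀ j, E j) :=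
  (LinearMap.single ℝ E i).mkContinuous 1 (fun x => by
    rw [LinearMap.single_apply, Pi.norm_single, one_mul])

lemma sgl_apply (i : Fin m) (x : E i) : sgl E i x = Pi.single i x := rfl

lemma udecomp (u : (∀ j, E j) →L[ℝ] ℝ) (x : ∀ j, E j) :
    u x = ∑ i, u (Pi.single i (x i)) := by
  conv_lhs => rw [← Finset.univ_sum_single x]
  rw [map_sum]

lemma sum_norm_comp_single_le (u : (∀ j, E j) →L[ℝ] ℝ) :
    ∑ i, ‖u.comp (sgl E i)‖ ≤ ‖u‖ := by
  by_cases hm : m = 0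
  · subst hm
    simp
  have hm' : 0 < m := Nat.pos_of_ne_zero hm
  refine le_of_forall_pos_le_add ?_
  intro ε hε
  set δ := ε / m with hδ
  have hδpos : 0 < δ := by positivity
  -- choose near-optimal unit vectors
  have hx : ∀ i : Fin m, ∃ x : E i, ‖x‖ ≤ 1 ∧ ‖u.comp (sgl E i)‖ - δ ≤ (u.comp (sgl E i)) x := by
    intro i
    by_cases hnorm : ‖u.comp (sgl E i)‖ ≤ δ
    · exact ⟨0, by simp, by simp; linarith⟩
    · push_neg at hnorm
      obtain ⟨y, hy1, hy2⟩ := (u.comp (sgl E i)).exists_lt_apply_of_lt_opNorm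
        (show ‖u.comp (sgl E i)‖ - δ < ‖u.comp (sgl E i)‖ by linarith)
      rcases le_or_gt 0 ((u.comp (sgl E i)) y) with hpos | hneg
      · exact ⟨y, hy1.le, by rw [Real.norm_eq_abs, abs_of_nonneg hpos] at hy2; linarith⟩
      · refine ⟨-y, ?_, ?_⟩
        · rw [norm_neg]; exact hy1.le
        · rw [map_neg]
          rw [Real.norm_eq_abs, abs_of_neg hneg] at hy2
          linarith
  choose x hx1 hx2 using hx
  have hxx : ‖(fun i => x i : ∀ j, E j)‖ ≤ 1 := by
    rw [pi_norm_le_iff_of_nonneg zero_le_one]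
    exact hx1
  have key : ∑ i, (‖u.comp (sgl E i)‖ - δ) ≤ u (fun i => x i) := by
    rw [udecomp u (fun i => x i)]
    apply Finset.sum_le_sum
    intro i _
    exact hx2 i
  have hsum : ∑ i, (‖u.comp (sgl E i)‖ - δ) = (∑ i, ‖u.comp (sgl E i)‖) - ε := by
    rw [Finset.sum_sub_distrib, Finset.sum_const, Finset.card_univ, Fintype.card_fin]
    congr 1
    rw [hδ, nsmul_eq_mul]
    field_simp
  have hub : u (fun i => x i) ≤ ‖u‖ :=
    le_trans (le_abs_self _) (by
      have := u.le_opNorm (fun i => x i)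
      rw [← Real.norm_eq_abs]
      calc ‖u (fun i => x i)‖ ≤ ‖u‖ * ‖(fun i => x i : ∀ j, E j)‖ := this
        _ ≤ ‖u‖ * 1 := by gcongr
        _ = ‖u‖ := mul_one _)
  linarith [key, hsum, hub]

end NormLemmas

end Auxiliary

/-- The linear observable diameter is unchanged under concatenation (for the `ℓ^∞`
product norm, which is the norm of the Pi type), even for dependent vectors, with
constants depending only on `C, c` and not on `m`. -/
theorem stmt_4 (C c : ℝ) (hC : 0 < C) (hc : 0 < c) :
    ∃ C' c' : ℝ, 0 < C' ∧ 0 < c' ∧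
      ∀ (m : ℕ), 1 ≤ m →
      ∀ (E : Fin m → Type) (_ : ∀ i, NormedAddCommGroup (E i))
        (_ : ∀ i, NormedSpace ℝ (E i))
        (Ω : Type) (_ : MeasureSpace Ω), IsProbabilityMeasure (ℙ : Measure Ω) →
        ∀ (Z : ∀ i, Ω → E i) (Zt : ∀ i, E i) (σ : ℝ), 0 < σ →
          (∀ i, LinearConcentration ℙ (Z i) (Zt i) σ C c) →
          LinearConcentration (E := ∀ i, E i) ℙ (fun ω i => Z i ω) Zt σ C' c' := by
  classical
  set K₁ : ℝ := 1 + C * Real.sqrt (π / (c/4)) with hK₁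
  set K₂ : ℝ := 1/4 + 1/(4*(c/4)) with hK₂
  have hK₁pos : 0 < K₁ := by rw [hK₁]; positivity
  have hK₂pos : 0 < K₂ := by rw [hK₂]; positivity
  refine ⟨K₁, 1/(4*K₂), hK₁pos, by positivity, ?_⟩
  intro m hm E iNA iNS Ω iMS hprob Z Zt σ hσ hZ
  intro u hu t ht
  set a : Fin m → ℝ := fun i => ‖u.comp (sgl E i)‖ with ha
  set A : ℝ := ∑ i, a i with hA
  have hA1 : A ≤ 1 := le_trans (sum_norm_comp_single_le u) hu
  have hai : ∀ i, 0 ≤ a i := fun i => norm_nonneg _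
  have hA0 : 0 ≤ A := Finset.sum_nonneg fun i _ => hai i
  set X : Fin m → Ω → ℝ := fun i ω => u.comp (sgl E i) (Z i ω) - u.comp (sgl E i) (Zt i) with hX
  set I : Finset (Fin m) := Finset.univ.filter (fun i => a i ≠ 0) with hI
  -- decomposition bound
  have hdecomp : ∀ ω, |u (fun i => Z i ω) - u Zt| ≤ ∑ i ∈ I, |X i ω| := by
    intro ω
    have h1 : u (fun i => Z i ω) - u Zt = ∑ i, X i ω := by
      rw [udecomp u (fun i => Z i ω), udecomp u Zt, ← Finset.sum_sub_distrib]
      rfl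
    have h2 : ∑ i, X i ω = ∑ i ∈ I, X i ω := by
      symm
      apply Finset.sum_subset (Finset.subset_univ _)
      intro i _ hiI
      have h0 : a i = 0 := by
        by_contra hne
        exact hiI (by simp [hI, hne])
      have hu0 : u.comp (sgl E i) = 0 := by
        rwa [show a i = ‖u.comp (sgl E i)‖ from rfl, norm_eq_zero] at h0
      have hz : ∀ x : E i, u (sgl E i x) = 0 := by
        intro x
        have := ContinuousLinearMap.ext_iff.mp hu0 x
        simpa using this
      show u.comp (sgl E i) (Z i ω) - u.comp (sgl E i) (Zt i) = 0
      rw [ContinuousLinearMap.comp_apply, ContinuousLinearMap.comp_apply, hz, hz, sub_zero]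
    rw [h1, h2]
    exact Finset.abs_sum_le_sum_abs _ _
  -- per-index tails
  have htail : ∀ i ∈ I, ∀ s : ℝ, 0 < s →
      ℙ {ω | s ≤ |X i ω|} ≤ ENNReal.ofReal (C * Real.exp (-c * (s/(a i * σ))^2)) := by
    intro i hiI s hs
    have hane : a i ≠ 0 := by simpa [hI] using hiI
    have hapos : 0 < a i := lt_of_le_of_ne (hai i) (Ne.symm hane)
    have hnorm : ‖(a i)⁻¹ • u.comp (sgl E i)‖ ≤ 1 := by
      have hns : ‖(a i)⁻¹ • u.comp (sgl E i)‖ = ‖(a i)⁻¹‖ * ‖u.comp (sgl E i)‖ :=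
        norm_smul ((a i)⁻¹) (u.comp (sgl E i))
      rw [hns, norm_inv, Real.norm_eq_abs, abs_of_pos hapos,
        show ‖u.comp (sgl E i)‖ = a i from rfl, inv_mul_cancel₀ hane]
    have hmain := hZ i ((a i)⁻¹ • u.comp (sgl E i)) hnorm (s / a i) (by positivity)
    have hset : {ω | s / a i ≤ |((a i)⁻¹ • u.comp (sgl E i)) (Z i ω)
        - ((a i)⁻¹ • u.comp (sgl E i)) (Zt i)|} = {ω | s ≤ |X i ω|} := by
      ext ω
      simp only [Set.mem_setOf_eq, ContinuousLinearMap.smul_apply, smul_eq_mul]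
      rw [← mul_sub, abs_mul, abs_inv, abs_of_pos hapos]
      rw [div_le_iff₀ hapos, mul_comm ((a i)⁻¹) _, mul_assoc, inv_mul_cancel₀ hane, mul_one]
    rw [hset] at hmain
    refine le_trans hmain (le_of_eq ?_)
    congr 3
    rw [div_div]
  -- envelopes
  have henv : ∀ i ∈ I, ∃ g : Ω → ℝ≥0∞, Measurable g ∧
      (∀ ω, ENNReal.ofReal |X i ω| ≤ g ω) ∧
      ∀ r : ℝ, 0 < r → ℙ {ω | ENNReal.ofReal r ≤ g ω} ≤
        ENNReal.ofReal (C * Real.exp (-(c/4) * (r/(a i * σ))^2)) := by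
    intro i hiI
    have hane : a i ≠ 0 := by simpa [hI] using hiI
    have hapos : 0 < a i := lt_of_le_of_ne (hai i) (Ne.symm hane)
    exact envelope ℙ (X i) C c (a i * σ) hC.le hc (by positivity) (htail i hiI)
  choose! g hgmeas hglb hgtail using henv
  -- truncated real envelopes
  set h : Fin m → Ω → ℝ := fun i ω => (min (g i ω) (ENNReal.ofReal t)).toReal with hh
  have hhmeas : ∀ i ∈ I, Measurable (h i) := by
    intro i hiI
    exact ((hgmeas i hiI).min measurable_const).ennreal_toReal
  have hh0 : ∀ i ω, 0 ≤ h i ω := fun i ω => ENNReal.toReal_nonneg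
  have hhtail : ∀ i ∈ I, ∀ r : ℝ, 0 < r →
      ℙ {ω | r ≤ h i ω} ≤ ENNReal.ofReal (C * Real.exp (-(c/4) * (r/(a i * σ))^2)) := by
    intro i hiI r hr
    refine le_trans (measure_mono ?_) (hgtail i hiI r hr)
    intro ω hω
    simp only [Set.mem_setOf_eq] at hω ⊢
    have hfin : min (g i ω) (ENNReal.ofReal t) ≠ ⊤ :=
      ne_top_of_le_ne_top ENNReal.ofReal_ne_top (min_le_right _ _)
    calc ENNReal.ofReal r ≤ ENNReal.ofReal (h i ω) := ENNReal.ofReal_le_ofReal hω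
      _ = min (g i ω) (ENNReal.ofReal t) := ENNReal.ofReal_toReal hfin
      _ ≤ g i ω := min_le_left _ _
  have hminh : ∀ i ∈ I, ∀ ω, min |X i ω| t ≤ h i ω := by
    intro i hiI ω
    rcases le_or_gt (ENNReal.ofReal t) (g i ω) with hle | hlt
    · have heq : h i ω = t := by
        show (min (g i ω) (ENNReal.ofReal t)).toReal = t
        rw [min_eq_right hle, ENNReal.toReal_ofReal ht.le]
      rw [heq]
      exact min_le_right _ _
    · have hfin : g i ω ≠ ⊤ := ne_top_of_lt (lt_of_lt_of_le hlt le_top)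
      have heq : h i ω = (g i ω).toReal := by
        show (min (g i ω) (ENNReal.ofReal t)).toReal = (g i ω).toReal
        rw [min_eq_left hlt.le]
      rw [heq]
      calc min |X i ω| t ≤ |X i ω| := min_le_left _ _
        _ ≤ (g i ω).toReal := (ENNReal.ofReal_le_iff_le_toReal hfin).mp (hglb i hiI ω)
  -- the event inclusion
  set H : Ω → ℝ := fun ω => ∑ i ∈ I, h i ω with hH
  have hineq : {ω | t ≤ |u (fun i => Z i ω) - u Zt|} ⊆ {ω | t ≤ H ω} := by
    intro ω hω
    simp only [Set.mem_setOf_eq] at hω ⊢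
    have h1 : t ≤ ∑ i ∈ I, |X i ω| := le_trans hω (hdecomp ω)
    have h2 : t ≤ ∑ i ∈ I, min |X i ω| t := by
      by_cases hex : ∃ i ∈ I, t ≤ |X i ω|
      · obtain ⟨i₀, hi₀I, hi₀⟩ := hex
        calc t = min |X i₀ ω| t := (min_eq_right hi₀).symm
          _ ≤ ∑ i ∈ I, min |X i ω| t :=
            Finset.single_le_sum (f := fun i => min |X i ω| t)
              (fun i _ => le_min (abs_nonneg _) ht.le) hi₀I
      · push_neg at hex
        have heq : ∑ i ∈ I, min |X i ω| t = ∑ i ∈ I, |X i ω| :=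
          Finset.sum_congr rfl (fun i hi => min_eq_left (hex i hi).le)
        rw [heq]; exact h1
    calc t ≤ ∑ i ∈ I, min |X i ω| t := h2
      _ ≤ H ω := Finset.sum_le_sum (fun i hi => hminh i hi ω)
  by_cases hIe : I = ∅
  · -- degenerate case: the functional vanishes identically
    have hempty : {ω | t ≤ |u (fun i => Z i ω) - u Zt|} = ∅ := by
      apply Set.eq_empty_iff_forall_notMem.mpr
      intro ω hω
      simp only [Set.mem_setOf_eq] at hω
      have hd := hdecomp ω
      rw [hIe, Finset.sum_empty] at hd
      linarith
    calc ℙ {ω | t ≤ |u (fun i => Z i ω) - u Zt|} = ℙ (∅ : Set Ω) := by rw [hempty]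
      _ = 0 := measure_empty
      _ ≤ _ := zero_le
  -- main case
  have hAI : ∑ i ∈ I, a i = A := by
    apply Finset.sum_subset (Finset.subset_univ _)
    intro i _ hiI
    by_contra hne
    exact hiI (by simp [hI, hne])
  have hApos : 0 < A := by
    obtain ⟨i₀, hi₀⟩ := Finset.nonempty_iff_ne_empty.mpr hIe
    have hane : a i₀ ≠ 0 := by simpa [hI] using hi₀
    calc (0:ℝ) < a i₀ := lt_of_le_of_ne (hai i₀) (Ne.symm hane)
      _ ≤ A := Finset.single_le_sum (fun i _ => hai i) (Finset.mem_univ i₀)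
  set p : Fin m → ℝ := fun i => a i / A with hp
  have hpsum : ∑ i ∈ I, p i = 1 := by
    show ∑ i ∈ I, a i / A = 1
    rw [← Finset.sum_div, hAI, div_self hApos.ne']
  have hppos : ∀ i ∈ I, 0 < p i := by
    intro i hiI
    have hane : a i ≠ 0 := by simpa [hI] using hiI
    have : 0 < a i := lt_of_le_of_ne (hai i) (Ne.symm hane)
    positivity
  set L : ℝ := t / (2*K₂*σ^2) with hL
  have hLpos : 0 < L := by rw [hL]; positivity
  -- MGF bounds for each coordinate
  have hMi : ∀ i ∈ I, ∫⁻ ω, ENNReal.ofReal (Real.exp ((L / p i) * h i ω)) ∂ℙ ≤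
      ENNReal.ofReal (K₁ * Real.exp (K₂ * ((L / p i) * (a i * σ))^2)) := by
    intro i hiI
    have hane : a i ≠ 0 := by simpa [hI] using hiI
    have hapos : 0 < a i := lt_of_le_of_ne (hai i) (Ne.symm hane)
    have hLp : 0 < L / p i := div_pos hLpos (hppos i hiI)
    have := mgf_bound ℙ (hhmeas i hiI) (fun ω => hh0 i ω) C (c/4) (a i * σ) (L / p i)
      hC.le (by positivity) (by positivity) hLp (hhtail i hiI)
    rw [← hK₁, ← hK₂] at this
    exact this
  -- Hölder
  have hHmeas : Measurable H := Finset.measurable_sum I (fun i hi => hhmeas i hi)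
  have hHolder : ∫⁻ ω, ENNReal.ofReal (Real.exp (L * H ω)) ∂ℙ ≤
      ENNReal.ofReal (K₁ * Real.exp (K₂ * L^2 * σ^2 * (A*A))) := by
    have hpt : ∀ ω, ENNReal.ofReal (Real.exp (L * H ω)) =
        ∏ i ∈ I, (ENNReal.ofReal (Real.exp ((L / p i) * h i ω))) ^ (p i) := by
      intro ω
      have e1 : ∀ i ∈ I, (ENNReal.ofReal (Real.exp ((L / p i) * h i ω))) ^ (p i)
          = ENNReal.ofReal (Real.exp (L * h i ω)) := by
        intro i hiI
        rw [ENNReal.ofReal_rpow_of_pos (Real.exp_pos _), ← Real.exp_mul]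
        congr 2
        have hpne : p i ≠ 0 := (hppos i hiI).ne'
        field_simp
      rw [Finset.prod_congr rfl e1,
        ← ENNReal.ofReal_prod_of_nonneg (fun i _ => (Real.exp_pos _).le), ← Real.exp_sum]
      congr 2
      exact Finset.mul_sum _ _ _
    calc ∫⁻ ω, ENNReal.ofReal (Real.exp (L * H ω)) ∂ℙ
        = ∫⁻ ω, ∏ i ∈ I, (ENNReal.ofReal (Real.exp ((L / p i) * h i ω))) ^ (p i) ∂ℙ := by
          congr 1; funext ω; exact hpt ω
      _ ≤ ∏ i ∈ I, (∫⁻ ω, ENNReal.ofReal (Real.exp ((L / p i) * h i ω)) ∂ℙ) ^ (p i) :=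
          ENNReal.lintegral_prod_norm_pow_le I
            (fun i hiI => ((Real.measurable_exp.comp
              ((hhmeas i hiI).const_mul (L / p i))).ennreal_ofReal).aemeasurable)
            hpsum (fun i hiI => (hppos i hiI).le)
      _ ≤ ∏ i ∈ I, (ENNReal.ofReal (K₁ * Real.exp (K₂ * ((L / p i) * (a i * σ))^2))) ^ (p i) :=
          Finset.prod_le_prod' (fun i hiI =>
            ENNReal.rpow_le_rpow (hMi i hiI) (hppos i hiI).le)
      _ = ENNReal.ofReal (∏ i ∈ I, (K₁ * Real.exp (K₂ * ((L / p i) * (a i * σ))^2)) ^ (p i)) := by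
          rw [ENNReal.ofReal_prod_of_nonneg (fun i hiI =>
            Real.rpow_nonneg (mul_pos hK₁pos (Real.exp_pos _)).le _)]
          exact Finset.prod_congr rfl (fun i hiI => by
            rw [ENNReal.ofReal_rpow_of_pos (mul_pos hK₁pos (Real.exp_pos _))])
      _ = ENNReal.ofReal (K₁ * Real.exp (K₂ * L^2 * σ^2 * (A*A))) := by
          congr 1
          have hfac : ∀ i ∈ I, (K₁ * Real.exp (K₂ * ((L / p i) * (a i * σ))^2)) ^ (p i)
              = Real.exp ((Real.log K₁ + K₂ * ((L / p i) * (a i * σ))^2) * p i) := by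
            intro i hiI
            rw [Real.rpow_def_of_pos (mul_pos hK₁pos (Real.exp_pos _)),
              Real.log_mul hK₁pos.ne' (Real.exp_pos _).ne', Real.log_exp]
          rw [Finset.prod_congr rfl hfac, ← Real.exp_sum]
          have hterm : ∀ i ∈ I, (Real.log K₁ + K₂ * ((L / p i) * (a i * σ))^2) * p i
              = Real.log K₁ * p i + K₂ * L^2 * σ^2 * A * a i := by
            intro i hiI
            have hane : a i ≠ 0 := by simpa [hI] using hiI
            have hpne : p i ≠ 0 := (hppos i hiI).ne'
            have hpi : p i = a i / A := rfl
            rw [add_mul]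
            congr 1
            rw [hpi]
            field_simp
          rw [Finset.sum_congr rfl hterm, Finset.sum_add_distrib, ← Finset.mul_sum,
            ← Finset.mul_sum, hpsum, mul_one, hAI, Real.exp_add, Real.exp_log hK₁pos]
          ring_nf
      _ = ENNReal.ofReal (K₁ * Real.exp (K₂ * L^2 * σ^2 * (A*A))) := rfl
  -- Chernoff bound
  have hMarkov : ENNReal.ofReal (Real.exp (L * t)) * ℙ {ω | t ≤ H ω} ≤
      ∫⁻ ω, ENNReal.ofReal (Real.exp (L * H ω)) ∂ℙ := by
    have hmk := mul_meas_ge_le_lintegral₀ (μ := ℙ)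
      (f := fun ω => ENNReal.ofReal (Real.exp (L * H ω)))
      ((Real.measurable_exp.comp (hHmeas.const_mul L)).ennreal_ofReal).aemeasurable
      (ENNReal.ofReal (Real.exp (L * t)))
    refine le_trans (mul_le_mul_right (measure_mono ?_) _) hmk
    intro ω hω
    simp only [Set.mem_setOf_eq] at hω ⊢
    exact ENNReal.ofReal_le_ofReal (Real.exp_le_exp.mpr (mul_le_mul_of_nonneg_left hω hLpos.le))
  have hfinal : ℙ {ω | t ≤ H ω} ≤ ENNReal.ofReal (K₁ * Real.exp (K₂*L^2*σ^2 - L*t)) := by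
    have hne0 : ENNReal.ofReal (Real.exp (L * t)) ≠ 0 := by
      simp only [ne_eq, ENNReal.ofReal_eq_zero, not_le]
      exact Real.exp_pos _
    have h1 : ℙ {ω | t ≤ H ω} * ENNReal.ofReal (Real.exp (L * t)) ≤
        ENNReal.ofReal (K₁ * Real.exp (K₂*L^2*σ^2)) := by
      rw [mul_comm]
      refine le_trans hMarkov (le_trans hHolder (ENNReal.ofReal_le_ofReal ?_))
      have hAA : A * A ≤ 1 := by nlinarith
      have hfac : (0:ℝ) ≤ K₂ * L^2 * σ^2 :=
        (mul_pos (mul_pos hK₂pos (pow_pos hLpos 2)) (pow_pos hσ 2)).le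
      have hmono : K₂ * L^2 * σ^2 * (A*A) ≤ K₂ * L^2 * σ^2 := by
        have := mul_le_mul_of_nonneg_left hAA hfac
        rwa [mul_one] at this
      exact mul_le_mul_of_nonneg_left (Real.exp_le_exp.mpr hmono) hK₁pos.le
    have h2 := (ENNReal.le_div_iff_mul_le (Or.inl hne0) (Or.inl ENNReal.ofReal_ne_top)).mpr h1
    refine le_trans h2 (le_of_eq ?_)
    rw [← ENNReal.ofReal_div_of_pos (Real.exp_pos _)]
    congr 1
    rw [mul_div_assoc, ← Real.exp_sub]
  have hexp : K₂*L^2*σ^2 - L*t = -(1/(4*K₂)) * (t/σ)^2 := by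
    rw [hL]
    field_simp
    ring
  refine le_trans (measure_mono hineq) (le_trans hfinal (le_of_eq ?_))
  rw [hexp]
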